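/- arXiv:1310.4477 — 2 statements merged into one kernel-verified Lean document; each statement's English description precedes it below -/
import Mathlib

section
/- Local quantum operations do not increase CCM: for every N-qubit state ρ and every local quantum operation ε = ε¹ ⊗ ⋯ ⊗ εᴺ (each εʲ given by single-qubit Kraus operators Eᵢʲ with Σᵢ (Eᵢʲ)† Eᵢʲ = 1), one has C(ε(ρ)) ≤ C(ρ). -/
open scoped BigOperators ComplexOrder Matrix

/-- Matrices representing operators on qubits indexed by `ι`. -/
abbrev QMat (ι : Type) : Type := Matrix (ι → Fin 2) (ι → Fin 2) ℂ

/-- A multi-qubit state: positive semidefinite with trace one. -/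
def IsState {ι : Type} [Fintype ι] [DecidableEq ι] (ρ : QMat ι) : Prop :=
  ρ.PosSemidef ∧ ρ.trace = 1

/-- Combine `u : A → Fin 2` with `w : Aᶜ → Fin 2` into a function on all qubits. -/
def glue {ι : Type} [Fintype ι] [DecidableEq ι] (A : Finset ι)
    (u : {x // x ∈ A} → Fin 2) (w : {x // x ∈ Aᶜ} → Fin 2) : ι → Fin 2 :=
  fun x => if h : x ∈ A then u ⟨x, h⟩ else w ⟨x, Finset.mem_compl.mpr h⟩

/-- The reduced matrix on the qubits in `A`, obtained by tracing out `Aᶜ`;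
`Tr_B ρ = reduceTo Bᶜ ρ`. -/
noncomputable def reduceTo {ι : Type} [Fintype ι] [DecidableEq ι] (A : Finset ι)
    (ρ : QMat ι) : QMat {x // x ∈ A} :=
  fun u v => ∑ w : {x // x ∈ Aᶜ} → Fin 2, ρ (glue A u w) (glue A v w)

/-- The Kronecker product of a state on `A` and a state on `Aᶜ`, with the tensor
factors placed back at their original qubit positions. -/
def boxProd {ι : Type} [Fintype ι] [DecidableEq ι] (A : Finset ι)
    (σ₁ : QMat {x // x ∈ A}) (σ₂ : QMat {x // x ∈ Aᶜ}) : QMat ι :=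
  fun x y =>
    σ₁ (fun a => x a.1) (fun a => y a.1) * σ₂ (fun b => x b.1) (fun b => y b.1)

/-- The cumulative correlation measure (CCM), defined recursively: it vanishes on
one-qubit states, and otherwise is the minimum over all bipartitions `(A, Aᶜ)` of
`2^(N-2) * D(ρ, ρ_A ⊠ ρ_{Aᶜ}) + C(ρ_A) + C(ρ_{Aᶜ})`. -/
noncomputable def CCM (D : ∀ (κ : Type) [Fintype κ] [DecidableEq κ], QMat κ → QMat κ → ℝ)
    (ι : Type) [Fintype ι] [DecidableEq ι] (ρ : QMat ι) : ℝ :=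
  if Fintype.card ι ≤ 1 then 0
  else
    sInf { r : ℝ |
      ∃ A : {A : Finset ι // A.Nonempty ∧ Aᶜ.Nonempty},
        r = (2 : ℝ) ^ (Fintype.card ι - 2) *
              D ι ρ (boxProd A.1 (reduceTo A.1 ρ) (reduceTo (A.1 : Finset ι)ᶜ ρ)) +
            CCM D {x // x ∈ A.1} (reduceTo A.1 ρ) +
            CCM D {x // x ∈ (A.1 : Finset ι)ᶜ} (reduceTo (A.1 : Finset ι)ᶜ ρ) }
termination_by Fintype.card ι
decreasing_by
  · have hA : (A.1 : Finset ι) ≠ Finset.univ := by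
      intro h
      rcases A.2.2 with ⟨x, hx⟩
      rw [h] at hx
      simp at hx
    calc Fintype.card {x // x ∈ A.1} = (A.1 : Finset ι).card := Fintype.card_coe _
      _ < Fintype.card ι := (Finset.card_lt_iff_ne_univ _).mpr hA
  · have hA : ((A.1 : Finset ι)ᶜ : Finset ι) ≠ Finset.univ :=
      (Finset.compl_ne_univ_iff_nonempty _).mpr A.2.1
    calc Fintype.card {x // x ∈ (A.1 : Finset ι)ᶜ} = ((A.1 : Finset ι)ᶜ).card :=
        Fintype.card_coe _
      _ < Fintype.card ι := (Finset.card_lt_iff_ne_univ _).mpr hA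
/-- The product Kraus operator `E_f = ⊗_j K j (f j)` acting on all qubits. -/
def krausProd {ι : Type} [Fintype ι] (m : ι → ℕ)
    (K : ∀ j : ι, Fin (m j) → Matrix (Fin 2) (Fin 2) ℂ) (f : ∀ j, Fin (m j)) :
    Matrix (ι → Fin 2) (ι → Fin 2) ℂ :=
  fun x y => ∏ j, K j (f j) (x j) (y j)

/-- The local quantum operation `ε = ε¹ ⊗ ⋯ ⊗ εᴺ` determined by single-qubit
Kraus operators `K j i` on each qubit `j`. -/
noncomputable def applyLocalKraus {ι : Type} [Fintype ι] [DecidableEq ι] (m : ι → ℕ)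
    (K : ∀ j : ι, Fin (m j) → Matrix (Fin 2) (Fin 2) ℂ) (ρ : QMat ι) : QMat ι :=
  ∑ f : ∀ j, Fin (m j), krausProd m K f * ρ * (krausProd m K f)ᴴ

/-- The axioms required of the distance `D`: nonnegativity and `D(ρ,ρ) = 0`,
invariance under unitary conjugation, contractivity under local quantum
operations, and monotonicity under partial traces. -/
structure DistanceAxioms
    (D : ∀ (κ : Type) [Fintype κ] [DecidableEq κ], QMat κ → QMat κ → ℝ) : Prop where
  nonneg : ∀ (ι : Type) [Fintype ι] [DecidableEq ι] (ρ σ : QMat ι),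
    IsState ρ → IsState σ → 0 ≤ D ι ρ σ
  self_eq_zero : ∀ (ι : Type) [Fintype ι] [DecidableEq ι] (ρ : QMat ι),
    IsState ρ → D ι ρ ρ = 0
  unitary_invariance : ∀ (ι : Type) [Fintype ι] [DecidableEq ι]
      (U : Matrix (ι → Fin 2) (ι → Fin 2) ℂ), U * Uᴴ = 1 → Uᴴ * U = 1 →
      ∀ ρ σ : QMat ι, IsState ρ → IsState σ →
        D ι (U * ρ * Uᴴ) (U * σ * Uᴴ) = D ι ρ σ
  contractivity : ∀ (ι : Type) [Fintype ι] [DecidableEq ι]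
      (m : ι → ℕ) (K : ∀ j : ι, Fin (m j) → Matrix (Fin 2) (Fin 2) ℂ),
      (∀ j, ∑ i, (K j i)ᴴ * K j i = 1) →
      ∀ ρ σ : QMat ι, IsState ρ → IsState σ →
        D ι (applyLocalKraus m K ρ) (applyLocalKraus m K σ) ≤ D ι ρ σ
  monotonicity : ∀ (ι : Type) [Fintype ι] [DecidableEq ι] (B : Finset ι)
      (ρ σ : QMat ι), IsState ρ → IsState σ →
        D {x // x ∈ Bᶜ} (reduceTo Bᶜ ρ) (reduceTo Bᶜ σ) ≤ D ι ρ σ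

/-- The Kronecker product of multi-qubit states, on the disjoint union of the
qubit index sets. -/
def kron {ι κ : Type} (φ : QMat ι) (ψ : QMat κ) : QMat (ι ⊕ κ) :=
  fun x y =>
    φ (fun i => x (Sum.inl i)) (fun i => y (Sum.inl i)) *
      ψ (fun j => x (Sum.inr j)) (fun j => y (Sum.inr j))

section Helpers

variable {ι : Type} [Fintype ι] [DecidableEq ι] (A : Finset ι)

lemma glue_restrict_left (u : {x // x ∈ A} → Fin 2) (w : {x // x ∈ Aᶜ} → Fin 2) :
    (fun a : {x // x ∈ A} => glue A u w a.1) = u := by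
  funext a; simp [glue, a.2]

lemma glue_restrict_right (u : {x // x ∈ A} → Fin 2) (w : {x // x ∈ Aᶜ} → Fin 2) :
    (fun b : {x // x ∈ Aᶜ} => glue A u w b.1) = w := by
  funext b
  have hb : b.1 ∉ A := Finset.mem_compl.mp b.2
  simp [glue, hb]

/-- Glueing as an equivalence. -/
def glueEquiv : (({x // x ∈ A} → Fin 2) × ({x // x ∈ Aᶜ} → Fin 2)) ≃ (ι → Fin 2) where
  toFun p := glue A p.1 p.2
  invFun s := (fun a => s a.1, fun b => s b.1)
  left_inv p := by
    ext1
    · exact glue_restrict_left A p.1 p.2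
    · exact glue_restrict_right A p.1 p.2
  right_inv s := by
    funext x
    by_cases h : x ∈ A <;> simp [glue, h]

lemma sum_glue {M : Type} [AddCommMonoid M] (F : (ι → Fin 2) → M) :
    ∑ s : ι → Fin 2, F s
      = ∑ u : {x // x ∈ A} → Fin 2, ∑ w : {x // x ∈ Aᶜ} → Fin 2, F (glue A u w) := by
  rw [← Equiv.sum_comp (glueEquiv A) F, Fintype.sum_prod_type]
  rfl

lemma prod_split {M : Type} [CommMonoid M] (g : ι → M) :
    ∏ j, g j = (∏ a : {x // x ∈ A}, g a.1) * ∏ b : {x // x ∈ Aᶜ}, g b.1 := by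
  rw [Finset.prod_coe_sort, Finset.prod_coe_sort, Finset.prod_mul_prod_compl]

/-- Dependent glue for Kraus indices. -/
def glueD (m : ι → ℕ) (g : ∀ a : {x // x ∈ A}, Fin (m a.1))
    (g' : ∀ b : {x // x ∈ Aᶜ}, Fin (m b.1)) : ∀ j, Fin (m j) :=
  fun j => if h : j ∈ A then g ⟨j, h⟩ else g' ⟨j, Finset.mem_compl.mpr h⟩

lemma glueD_restrict_left (m : ι → ℕ) (g : ∀ a : {x // x ∈ A}, Fin (m a.1))
    (g' : ∀ b : {x // x ∈ Aᶜ}, Fin (m b.1)) :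
    (fun a : {x // x ∈ A} => glueD A m g g' a.1) = g := by
  funext a; simp [glueD, a.2]

lemma glueD_restrict_right (m : ι → ℕ) (g : ∀ a : {x // x ∈ A}, Fin (m a.1))
    (g' : ∀ b : {x // x ∈ Aᶜ}, Fin (m b.1)) :
    (fun b : {x // x ∈ Aᶜ} => glueD A m g g' b.1) = g' := by
  funext b
  have hb : b.1 ∉ A := Finset.mem_compl.mp b.2
  simp [glueD, hb]

def glueDEquiv (m : ι → ℕ) :
    ((∀ a : {x // x ∈ A}, Fin (m a.1)) × (∀ b : {x // x ∈ Aᶜ}, Fin (m b.1)))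
      ≃ (∀ j, Fin (m j)) where
  toFun p := glueD A m p.1 p.2
  invFun f := (fun a => f a.1, fun b => f b.1)
  left_inv p := by
    ext1
    · exact glueD_restrict_left A m p.1 p.2
    · exact glueD_restrict_right A m p.1 p.2
  right_inv f := by
    funext x
    by_cases h : x ∈ A <;> simp [glueD, h]

lemma sum_glueD {M : Type} [AddCommMonoid M] (m : ι → ℕ) (F : (∀ j, Fin (m j)) → M) :
    ∑ f : ∀ j, Fin (m j), F f
      = ∑ g : ∀ a : {x // x ∈ A}, Fin (m a.1), ∑ g' : ∀ b : {x // x ∈ Aᶜ}, Fin (m b.1),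
          F (glueD A m g g') := by
  rw [← Equiv.sum_comp (glueDEquiv A m) F, Fintype.sum_prod_type]
  rfl

end Helpers
section BoxAlg

variable {ι : Type} [Fintype ι] [DecidableEq ι] (A : Finset ι)

lemma boxProd_glue_apply (P : QMat {x // x ∈ A}) (Q : QMat {x // x ∈ Aᶜ})
    (u u' : {x // x ∈ A} → Fin 2) (w w' : {x // x ∈ Aᶜ} → Fin 2) :
    boxProd A P Q (glue A u w) (glue A u' w') = P u u' * Q w w' := by
  simp only [boxProd, glue_restrict_left, glue_restrict_right]

lemma boxProd_mul (M₁ N₁ : QMat {x // x ∈ A}) (M₂ N₂ : QMat {x // x ∈ Aᶜ}) :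
    boxProd A (M₁ * N₁) (M₂ * N₂) = boxProd A M₁ M₂ * boxProd A N₁ N₂ := by
  ext x y
  rw [Matrix.mul_apply, sum_glue A fun z => boxProd A M₁ M₂ x z * boxProd A N₁ N₂ z y]
  simp only [boxProd, Matrix.mul_apply, glue_restrict_left, glue_restrict_right]
  rw [Finset.sum_mul_sum]
  exact Finset.sum_congr rfl fun u' _ => Finset.sum_congr rfl fun w' _ => by ring

lemma boxProd_conjTranspose (M : QMat {x // x ∈ A}) (N : QMat {x // x ∈ Aᶜ}) :
    (boxProd A M N)ᴴ = boxProd A Mᴴ Nᴴ := by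
  ext x y
  simp only [boxProd, Matrix.conjTranspose_apply, star_mul']

lemma boxProd_sum_left {κ : Type} (s : Finset κ) (M : κ → QMat {x // x ∈ A})
    (N : QMat {x // x ∈ Aᶜ}) :
    boxProd A (∑ i ∈ s, M i) N = ∑ i ∈ s, boxProd A (M i) N := by
  ext x y
  simp only [boxProd, Matrix.sum_apply, Finset.sum_mul]

lemma boxProd_sum_right {κ : Type} (s : Finset κ) (M : QMat {x // x ∈ A})
    (N : κ → QMat {x // x ∈ Aᶜ}) :
    boxProd A M (∑ i ∈ s, N i) = ∑ i ∈ s, boxProd A M (N i) := by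
  ext x y
  simp only [boxProd, Matrix.sum_apply, Finset.mul_sum]

lemma trace_boxProd (M : QMat {x // x ∈ A}) (N : QMat {x // x ∈ Aᶜ}) :
    (boxProd A M N).trace = M.trace * N.trace := by
  simp only [Matrix.trace, Matrix.diag]
  rw [sum_glue A fun s => boxProd A M N s s]
  simp only [boxProd_glue_apply]
  rw [Finset.sum_mul_sum]

lemma krausProd_eq_boxProd (m : ι → ℕ) (K : ∀ j : ι, Fin (m j) → Matrix (Fin 2) (Fin 2) ℂ)
    (g : ∀ a : {x // x ∈ A}, Fin (m a.1)) (g' : ∀ b : {x // x ∈ Aᶜ}, Fin (m b.1)) :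
    krausProd m K (glueD A m g g')
      = boxProd A (krausProd (fun a => m a.1) (fun a => K a.1) g)
          (krausProd (fun b => m b.1) (fun b => K b.1) g') := by
  ext x y
  simp only [krausProd, boxProd]
  rw [prod_split A]
  congr 1
  · refine Finset.prod_congr rfl fun a _ => ?_
    have : glueD A m g g' a.1 = g a := congrFun (glueD_restrict_left A m g g') a
    rw [this]
  · refine Finset.prod_congr rfl fun b _ => ?_
    have : glueD A m g g' b.1 = g' b := congrFun (glueD_restrict_right A m g g') b
    rw [this]

end BoxAlg

section Kraus

variable {ι : Type} [Fintype ι] [DecidableEq ι]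

lemma krausProd_sum_one (m : ι → ℕ) (K : ∀ j : ι, Fin (m j) → Matrix (Fin 2) (Fin 2) ℂ)
    (hK : ∀ j, ∑ i, (K j i)ᴴ * K j i = 1) :
    ∑ f : ∀ j, Fin (m j), (krausProd m K f)ᴴ * krausProd m K f = 1 := by
  ext x y
  simp only [Matrix.sum_apply, Matrix.mul_apply, Matrix.conjTranspose_apply, krausProd]
  have step1 : ∀ (f : ∀ j, Fin (m j)),
      ∑ z : ι → Fin 2, star (∏ j, K j (f j) (z j) (x j)) * ∏ j, K j (f j) (z j) (y j)
        = ∏ j, ∑ c : Fin 2, star (K j (f j) c (x j)) * K j (f j) c (y j) := by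
    intro f
    rw [Fintype.prod_sum fun j c => star (K j (f j) c (x j)) * K j (f j) c (y j)]
    refine Finset.sum_congr rfl fun z _ => ?_
    rw [star_prod, ← Finset.prod_mul_distrib]
  rw [Finset.sum_congr rfl fun f _ => step1 f]
  rw [← Fintype.prod_sum fun j i => ∑ c : Fin 2, star (K j i c (x j)) * K j i c (y j)]
  have step2 : ∀ j : ι, (∑ i, ∑ c : Fin 2, star (K j i c (x j)) * K j i c (y j))
      = (1 : Matrix (Fin 2) (Fin 2) ℂ) (x j) (y j) := by
    intro j
    rw [← hK j]
    simp [Matrix.sum_apply, Matrix.mul_apply, Matrix.conjTranspose_apply]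
  rw [Finset.prod_congr rfl fun j _ => step2 j]
  simp only [Matrix.one_apply]
  rw [Finset.prod_boole]
  simp [funext_iff]
section Reduce

variable {ι : Type} [Fintype ι] [DecidableEq ι] (A : Finset ι)

/-- Weighted partial trace. -/
noncomputable def redWt (G : QMat {x // x ∈ Aᶜ}) (ρ : QMat ι) : QMat {x // x ∈ A} :=
  fun u v => ∑ ws : {x // x ∈ Aᶜ} → Fin 2, ∑ wt : {x // x ∈ Aᶜ} → Fin 2,
    ρ (glue A u ws) (glue A v wt) * G wt ws

lemma redWt_one (ρ : QMat ι) : redWt A 1 ρ = reduceTo A ρ := by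
  ext u v
  simp [redWt, reduceTo, Matrix.one_apply, mul_ite]

lemma redWt_sum {κ : Type} (s : Finset κ) (G : κ → QMat {x // x ∈ Aᶜ}) (ρ : QMat ι) :
    redWt A (∑ i ∈ s, G i) ρ = ∑ i ∈ s, redWt A (G i) ρ := by
  ext u v
  simp only [redWt, Matrix.sum_apply, Finset.mul_sum]
  calc (∑ ws : {x // x ∈ Aᶜ} → Fin 2, ∑ wt : {x // x ∈ Aᶜ} → Fin 2, ∑ i ∈ s,
          ρ (glue A u ws) (glue A v wt) * G i wt ws)
      = ∑ ws : {x // x ∈ Aᶜ} → Fin 2, ∑ i ∈ s, ∑ wt : {x // x ∈ Aᶜ} → Fin 2,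
          ρ (glue A u ws) (glue A v wt) * G i wt ws :=
        Finset.sum_congr rfl fun ws _ => Finset.sum_comm
    _ = _ := Finset.sum_comm

lemma reduceTo_sum {κ : Type} (s : Finset κ) (M : κ → QMat ι) :
    reduceTo A (∑ i ∈ s, M i) = ∑ i ∈ s, reduceTo A (M i) := by
  ext u v
  simp only [reduceTo, Matrix.sum_apply]
  exact Finset.sum_comm

lemma reduceTo_box_mul_box (P R : QMat {x // x ∈ A}) (Q S : QMat {x // x ∈ Aᶜ}) (ρ : QMat ι) :
    reduceTo A (boxProd A P Q * ρ * boxProd A R S) = P * redWt A (S * Q) ρ * R := by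
  have reorder : ∀ (F : ({x // x ∈ A} → Fin 2) → ({x // x ∈ A} → Fin 2) →
      ({x // x ∈ Aᶜ} → Fin 2) → ({x // x ∈ Aᶜ} → Fin 2) → ({x // x ∈ Aᶜ} → Fin 2) → ℂ),
      (∑ w, ∑ v', ∑ wt, ∑ u', ∑ ws, F u' v' ws wt w)
        = ∑ v', ∑ u', ∑ ws, ∑ wt, ∑ w, F u' v' ws wt w := by
    intro F
    rw [Finset.sum_comm]
    refine Finset.sum_congr rfl fun v' _ => ?_
    rw [show (∑ w, ∑ wt, ∑ u', ∑ ws, F u' v' ws wt w)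
        = ∑ w, ∑ u', ∑ wt, ∑ ws, F u' v' ws wt w from
      Finset.sum_congr rfl fun w _ => Finset.sum_comm]
    rw [Finset.sum_comm]
    refine Finset.sum_congr rfl fun u' _ => ?_
    rw [show (∑ w, ∑ wt, ∑ ws, F u' v' ws wt w)
        = ∑ w, ∑ ws, ∑ wt, F u' v' ws wt w from
      Finset.sum_congr rfl fun w _ => Finset.sum_comm]
    rw [Finset.sum_comm]
    exact Finset.sum_congr rfl fun ws _ => Finset.sum_comm
  ext u v
  simp only [reduceTo, redWt, Matrix.mul_apply, sum_glue A, boxProd_glue_apply]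
  simp only [Finset.sum_mul, Finset.mul_sum]
  rw [reorder fun u' v' ws wt w =>
    P u u' * Q w ws * ρ (glue A u' ws) (glue A v' wt) * (R v' v * S wt w)]
  refine Finset.sum_congr rfl fun v' _ => Finset.sum_congr rfl fun u' _ =>
    Finset.sum_congr rfl fun ws _ => Finset.sum_congr rfl fun wt _ =>
    Finset.sum_congr rfl fun w _ => by ring

end Reduce
section Comm

variable {ι : Type} [Fintype ι] [DecidableEq ι] (A : Finset ι)

lemma reduceTo_applyLocalKraus (m : ι → ℕ)
    (K : ∀ j : ι, Fin (m j) → Matrix (Fin 2) (Fin 2) ℂ)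
    (hK : ∀ j, ∑ i, (K j i)ᴴ * K j i = 1) (ρ : QMat ι) :
    reduceTo A (applyLocalKraus m K ρ)
      = applyLocalKraus (fun a : {x // x ∈ A} => m a.1) (fun a => K a.1) (reduceTo A ρ) := by
  rw [applyLocalKraus, reduceTo_sum, sum_glueD A m
    (fun f => reduceTo A (krausProd m K f * ρ * (krausProd m K f)ᴴ))]
  have hterm : ∀ (g : ∀ a : {x // x ∈ A}, Fin (m a.1)) (g' : ∀ b : {x // x ∈ Aᶜ}, Fin (m b.1)),
      reduceTo A (krausProd m K (glueD A m g g') * ρ * (krausProd m K (glueD A m g g'))ᴴ)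
        = krausProd (fun a : {x // x ∈ A} => m a.1) (fun a => K a.1) g *
            redWt A ((krausProd (fun b : {x // x ∈ Aᶜ} => m b.1) (fun b => K b.1) g')ᴴ *
                krausProd (fun b : {x // x ∈ Aᶜ} => m b.1) (fun b => K b.1) g') ρ *
            (krausProd (fun a : {x // x ∈ A} => m a.1) (fun a => K a.1) g)ᴴ := by
    intro g g'
    rw [krausProd_eq_boxProd A m K g g', boxProd_conjTranspose, reduceTo_box_mul_box]
  simp only [hterm]
  have hinner : ∀ g : ∀ a : {x // x ∈ A}, Fin (m a.1),
      (∑ g' : ∀ b : {x // x ∈ Aᶜ}, Fin (m b.1),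
        krausProd (fun a : {x // x ∈ A} => m a.1) (fun a => K a.1) g *
          redWt A ((krausProd (fun b : {x // x ∈ Aᶜ} => m b.1) (fun b => K b.1) g')ᴴ *
              krausProd (fun b : {x // x ∈ Aᶜ} => m b.1) (fun b => K b.1) g') ρ *
          (krausProd (fun a : {x // x ∈ A} => m a.1) (fun a => K a.1) g)ᴴ)
        = krausProd (fun a : {x // x ∈ A} => m a.1) (fun a => K a.1) g * reduceTo A ρ *
            (krausProd (fun a : {x // x ∈ A} => m a.1) (fun a => K a.1) g)ᴴ := by
    intro g
    rw [← Finset.sum_mul, ← Finset.mul_sum, ← redWt_sum,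
      krausProd_sum_one (fun b : {x // x ∈ Aᶜ} => m b.1) (fun b => K b.1) (fun b => hK b.1),
      redWt_one]
  simp only [hinner]
  rfl

lemma applyLocalKraus_boxProd (m : ι → ℕ)
    (K : ∀ j : ι, Fin (m j) → Matrix (Fin 2) (Fin 2) ℂ)
    (σ₁ : QMat {x // x ∈ A}) (σ₂ : QMat {x // x ∈ Aᶜ}) :
    applyLocalKraus m K (boxProd A σ₁ σ₂)
      = boxProd A (applyLocalKraus (fun a : {x // x ∈ A} => m a.1) (fun a => K a.1) σ₁)
          (applyLocalKraus (fun b : {x // x ∈ Aᶜ} => m b.1) (fun b => K b.1) σ₂) := by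
  rw [applyLocalKraus, sum_glueD A m
    (fun f => krausProd m K f * boxProd A σ₁ σ₂ * (krausProd m K f)ᴴ)]
  have hterm : ∀ (g : ∀ a : {x // x ∈ A}, Fin (m a.1)) (g' : ∀ b : {x // x ∈ Aᶜ}, Fin (m b.1)),
      krausProd m K (glueD A m g g') * boxProd A σ₁ σ₂ * (krausProd m K (glueD A m g g'))ᴴ
        = boxProd A
            (krausProd (fun a : {x // x ∈ A} => m a.1) (fun a => K a.1) g * σ₁ *
              (krausProd (fun a : {x // x ∈ A} => m a.1) (fun a => K a.1) g)ᴴ)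
            (krausProd (fun b : {x // x ∈ Aᶜ} => m b.1) (fun b => K b.1) g' * σ₂ *
              (krausProd (fun b : {x // x ∈ Aᶜ} => m b.1) (fun b => K b.1) g')ᴴ) := by
    intro g g'
    rw [krausProd_eq_boxProd A m K g g', boxProd_conjTranspose, ← boxProd_mul, ← boxProd_mul]
  simp only [hterm]
  rw [applyLocalKraus, applyLocalKraus, boxProd_sum_left]
  exact Finset.sum_congr rfl fun g _ => (boxProd_sum_right A Finset.univ _ _).symm

end Comm

section States

variable {ι : Type} [Fintype ι] [DecidableEq ι] (A : Finset ι)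

lemma isState_applyLocalKraus (m : ι → ℕ)
    (K : ∀ j : ι, Fin (m j) → Matrix (Fin 2) (Fin 2) ℂ)
    (hK : ∀ j, ∑ i, (K j i)ᴴ * K j i = 1) (ρ : QMat ι) (hρ : IsState ρ) :
    IsState (applyLocalKraus m K ρ) := by
  constructor
  · exact Finset.sum_induction _ _ (fun a b ha hb => ha.add hb) Matrix.PosSemidef.zero
      (fun f _ => hρ.1.mul_mul_conjTranspose_same _)
  · rw [applyLocalKraus, Matrix.trace_sum]
    calc (∑ f : ∀ j, Fin (m j), (krausProd m K f * ρ * (krausProd m K f)ᴴ).trace)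
        = ∑ f : ∀ j, Fin (m j), ((krausProd m K f)ᴴ * krausProd m K f * ρ).trace := by
          refine Finset.sum_congr rfl fun f _ => ?_
          rw [Matrix.trace_mul_cycle]
      _ = ((∑ f : ∀ j, Fin (m j), (krausProd m K f)ᴴ * krausProd m K f) * ρ).trace := by
          rw [Finset.sum_mul, Matrix.trace_sum]
      _ = 1 := by rw [krausProd_sum_one m K hK, one_mul, hρ.2]

def isoMat (w : {x // x ∈ Aᶜ} → Fin 2) : Matrix (ι → Fin 2) ({x // x ∈ A} → Fin 2) ℂ :=
  fun s u => if s = glue A u w then (1 : ℂ) else 0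

lemma isState_reduceTo (ρ : QMat ι) (hρ : IsState ρ) : IsState (reduceTo A ρ) := by
  constructor
  · have key : reduceTo A ρ = ∑ w : {x // x ∈ Aᶜ} → Fin 2, (isoMat A w)ᴴ * ρ * isoMat A w := by
      ext u v
      simp only [Matrix.sum_apply, Matrix.mul_apply, Matrix.conjTranspose_apply, reduceTo]
      refine Finset.sum_congr rfl fun w _ => ?_
      simp only [isoMat, Matrix.conjTranspose_apply, apply_ite (star : ℂ → ℂ), star_one, star_zero,
        ite_mul, mul_ite, one_mul, zero_mul, mul_one, mul_zero, Finset.sum_ite_eq',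
        Finset.mem_univ, if_true]
    rw [key]
    exact Finset.sum_induction _ _ (fun a b ha hb => ha.add hb) Matrix.PosSemidef.zero
      (fun w _ => hρ.1.conjTranspose_mul_mul_same _)
  · have : (reduceTo A ρ).trace = ρ.trace := by
      simp only [Matrix.trace, Matrix.diag, reduceTo]
      exact (sum_glue A fun s => ρ s s).symm
    rw [this, hρ.2]

lemma isState_boxProd (σ₁ : QMat {x // x ∈ A}) (σ₂ : QMat {x // x ∈ Aᶜ})
    (h₁ : IsState σ₁) (h₂ : IsState σ₂) : IsState (boxProd A σ₁ σ₂) := by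
  constructor
  · obtain ⟨B₁, hB₁⟩ : ∃ B : QMat {x // x ∈ A}, σ₁ = Bᴴ * B := by
      open scoped MatrixOrder Matrix.Norms.L2Operator in
      exact CStarAlgebra.nonneg_iff_eq_star_mul_self.mp h₁.1.nonneg
    obtain ⟨B₂, hB₂⟩ : ∃ B : QMat {x // x ∈ Aᶜ}, σ₂ = Bᴴ * B := by
      open scoped MatrixOrder Matrix.Norms.L2Operator in
      exact CStarAlgebra.nonneg_iff_eq_star_mul_self.mp h₂.1.nonneg
    suffices hE : boxProd A σ₁ σ₂ = (boxProd A B₁ B₂)ᴴ * boxProd A B₁ B₂ by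
      rw [hE]; exact Matrix.posSemidef_conjTranspose_mul_self _
    rw [hB₁, hB₂, boxProd_mul, boxProd_conjTranspose]
  · rw [trace_boxProd, h₁.2, h₂.2, one_mul]

end States
section CCMLemmas

lemma card_subtype_lt {ι : Type} [Fintype ι] [DecidableEq ι] {A : Finset ι}
    (hA : Aᶜ.Nonempty) : Fintype.card {x // x ∈ A} < Fintype.card ι := by
  have hAne : A ≠ Finset.univ := by
    intro h
    rcases hA with ⟨x, hx⟩
    rw [h] at hx
    simp at hx
  calc Fintype.card {x // x ∈ A} = A.card := Fintype.card_coe _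
    _ < Fintype.card ι := (Finset.card_lt_iff_ne_univ _).mpr hAne

lemma CCM_nonneg (D : ∀ (κ : Type) [Fintype κ] [DecidableEq κ], QMat κ → QMat κ → ℝ)
    (hD : DistanceAxioms D) :
    ∀ (n : ℕ) (ι : Type) [Fintype ι] [DecidableEq ι], Fintype.card ι ≤ n →
      ∀ ρ : QMat ι, IsState ρ → 0 ≤ CCM D ι ρ := by
  intro n
  induction n with
  | zero =>
    intro ι _ _ hcard ρ hρ
    rw [CCM, if_pos (by omega)]
  | succ n IH =>
    intro ι _ _ hcard ρ hρ
    rw [CCM]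
    split
    · exact le_refl 0
    · next h =>
      apply Real.sInf_nonneg
      rintro r ⟨A, rfl⟩
      have hstA := isState_reduceTo A.1 ρ hρ
      have hstB := isState_reduceTo (A.1 : Finset ι)ᶜ ρ hρ
      have h1 : 0 ≤ D ι ρ (boxProd A.1 (reduceTo A.1 ρ) (reduceTo (A.1 : Finset ι)ᶜ ρ)) :=
        hD.nonneg ι ρ _ hρ (isState_boxProd A.1 _ _ hstA hstB)
      have cA : Fintype.card {x // x ∈ A.1} ≤ n := by
        have := card_subtype_lt (A := A.1) A.2.2
        omega
      have cB : Fintype.card {x // x ∈ (A.1 : Finset ι)ᶜ} ≤ n := by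
        have := card_subtype_lt (A := (A.1 : Finset ι)ᶜ) (by simpa using A.2.1)
        omega
      have h2 := IH {x // x ∈ A.1} cA (reduceTo A.1 ρ) hstA
      have h3 := IH {x // x ∈ (A.1 : Finset ι)ᶜ} cB (reduceTo (A.1 : Finset ι)ᶜ ρ) hstB
      have h0 : (0:ℝ) ≤ (2 : ℝ) ^ (Fintype.card ι - 2) := by positivity
      nlinarith

end CCMLemmas
lemma CCM_mono (D : ∀ (κ : Type) [Fintype κ] [DecidableEq κ], QMat κ → QMat κ → ℝ)
    (hD : DistanceAxioms D) :
    ∀ (n : ℕ) (ι : Type) [Fintype ι] [DecidableEq ι], Fintype.card ι ≤ n →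
      ∀ (m : ι → ℕ) (K : ∀ j : ι, Fin (m j) → Matrix (Fin 2) (Fin 2) ℂ),
        (∀ j, ∑ i, (K j i)ᴴ * K j i = 1) →
        ∀ ρ : QMat ι, IsState ρ → CCM D ι (applyLocalKraus m K ρ) ≤ CCM D ι ρ := by
  intro n
  induction n with
  | zero =>
    intro ι _ _ hcard m K hK ρ hρ
    rw [CCM, CCM, if_pos (by omega), if_pos (by omega)]
  | succ n IH =>
    intro ι _ _ hcard m K hK ρ hρ
    by_cases h : Fintype.card ι ≤ 1
    · rw [CCM, CCM, if_pos h, if_pos h]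
    · rw [CCM, CCM, if_neg h, if_neg h]
      have hερ := isState_applyLocalKraus m K hK ρ hρ
      -- the epsilon-set is bounded below by 0
      have hbdd : BddBelow {r : ℝ |
          ∃ A : {A : Finset ι // A.Nonempty ∧ Aᶜ.Nonempty},
            r = (2 : ℝ) ^ (Fintype.card ι - 2) *
                  D ι (applyLocalKraus m K ρ)
                    (boxProd A.1 (reduceTo A.1 (applyLocalKraus m K ρ))
                      (reduceTo (A.1 : Finset ι)ᶜ (applyLocalKraus m K ρ))) +
                CCM D {x // x ∈ A.1} (reduceTo A.1 (applyLocalKraus m K ρ)) +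
                CCM D {x // x ∈ (A.1 : Finset ι)ᶜ}
                  (reduceTo (A.1 : Finset ι)ᶜ (applyLocalKraus m K ρ)) } := by
        refine ⟨0, ?_⟩
        rintro r ⟨A, rfl⟩
        have hstA := isState_reduceTo A.1 _ hερ
        have hstB := isState_reduceTo (A.1 : Finset ι)ᶜ _ hερ
        have h1 : 0 ≤ D ι (applyLocalKraus m K ρ)
            (boxProd A.1 (reduceTo A.1 (applyLocalKraus m K ρ))
              (reduceTo (A.1 : Finset ι)ᶜ (applyLocalKraus m K ρ))) :=
          hD.nonneg ι _ _ hερ (isState_boxProd A.1 _ _ hstA hstB)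
        have cA : Fintype.card {x // x ∈ A.1} ≤ n + 1 := by
          have := card_subtype_lt (A := A.1) A.2.2
          omega
        have cB : Fintype.card {x // x ∈ (A.1 : Finset ι)ᶜ} ≤ n + 1 := by
          have := card_subtype_lt (A := (A.1 : Finset ι)ᶜ) (by simpa using A.2.1)
          omega
        have h2 := CCM_nonneg D hD (n+1) {x // x ∈ A.1} cA _ hstA
        have h3 := CCM_nonneg D hD (n+1) {x // x ∈ (A.1 : Finset ι)ᶜ} cB _ hstB
        have h0 : (0:ℝ) ≤ (2 : ℝ) ^ (Fintype.card ι - 2) := by positivity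
        nlinarith
      -- the rho-set is nonempty
      have hne : ∃ A : Finset ι, A.Nonempty ∧ Aᶜ.Nonempty := by
        have h2 : 2 ≤ Fintype.card ι := by omega
        have : Nonempty ι := Fintype.card_pos_iff.mp (by omega)
        obtain ⟨a⟩ := this
        refine ⟨{a}, Finset.singleton_nonempty a, ?_⟩
        rw [← Finset.card_pos, Finset.card_compl, Finset.card_singleton]
        omega
      obtain ⟨A₀, hA₀⟩ := hne
      refine le_csInf ⟨_, ⟨⟨A₀, hA₀⟩, rfl⟩⟩ ?_
      rintro r ⟨A, rfl⟩
      refine le_trans (csInf_le hbdd ⟨A, rfl⟩) ?_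
      -- now compare the terms for the same bipartition A
      rw [reduceTo_applyLocalKraus A.1 m K hK ρ,
        reduceTo_applyLocalKraus (A.1 : Finset ι)ᶜ m K hK ρ,
        ← applyLocalKraus_boxProd A.1 m K (reduceTo A.1 ρ) (reduceTo (A.1 : Finset ι)ᶜ ρ)]
      have hstA := isState_reduceTo A.1 ρ hρ
      have hstB := isState_reduceTo (A.1 : Finset ι)ᶜ ρ hρ
      have hbox : IsState (boxProd A.1 (reduceTo A.1 ρ) (reduceTo (A.1 : Finset ι)ᶜ ρ)) :=
        isState_boxProd A.1 _ _ hstA hstB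
      have hcontr := hD.contractivity ι m K hK ρ
        (boxProd A.1 (reduceTo A.1 ρ) (reduceTo (A.1 : Finset ι)ᶜ ρ)) hρ hbox
      have cA : Fintype.card {x // x ∈ A.1} ≤ n := by
        have := card_subtype_lt (A := A.1) A.2.2
        omega
      have cB : Fintype.card {x // x ∈ (A.1 : Finset ι)ᶜ} ≤ n := by
        have := card_subtype_lt (A := (A.1 : Finset ι)ᶜ) (by simpa using A.2.1)
        omega
      have hIH1 := IH {x // x ∈ A.1} cA (fun a => m a.1) (fun a => K a.1)
        (fun a => hK a.1) (reduceTo A.1 ρ) hstA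
      have hIH2 := IH {x // x ∈ (A.1 : Finset ι)ᶜ} cB (fun b => m b.1) (fun b => K b.1)
        (fun b => hK b.1) (reduceTo (A.1 : Finset ι)ᶜ ρ) hstB
      have h0 : (0:ℝ) ≤ (2 : ℝ) ^ (Fintype.card ι - 2) := by positivity
      have hmul := mul_le_mul_of_nonneg_left hcontr h0
      exact add_le_add (add_le_add hmul hIH1) hIH2

/-- Local quantum operations do not increase CCM: for every
`N`-qubit state `ρ` and every local quantum operation `ε = ε¹ ⊗ ⋯ ⊗ εᴺ` (each
`εʲ` given by single-qubit Kraus operators with `∑ i, (Eᵢʲ)† Eᵢʲ = 1`), one has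
`C(ε(ρ)) ≤ C(ρ)`. -/
theorem ccm_local_operations_monotone
    (D : ∀ (κ : Type) [Fintype κ] [DecidableEq κ], QMat κ → QMat κ → ℝ)
    (hD : DistanceAxioms D)
    (N : ℕ) (hN : 1 ≤ N)
    (m : Fin N → ℕ) (K : ∀ j : Fin N, Fin (m j) → Matrix (Fin 2) (Fin 2) ℂ)
    (hK : ∀ j, ∑ i, (K j i)ᴴ * K j i = 1)
    (ρ : QMat (Fin N)) (hρ : IsState ρ) :
    CCM D (Fin N) (applyLocalKraus m K ρ) ≤ CCM D (Fin N) ρ := by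
  exact CCM_mono D hD N (Fin N) (by simp) m K hK ρ hρ
end Kraus
end

section
/- CCM of GHZ states: fix d ≥ 0 and N ≥ 2; suppose that D(ρ_{GHZ_N}, (ρ_{GHZ_N})_A ⊠ (ρ_{GHZ_N})_B) = 1 for every bipartition (A,B) of the N qubits, and that for every M with 2 ≤ M ≤ N−1 and every bipartition (A,B) of the M qubits, D(τ_M, (τ_M)_A ⊠ (τ_M)_B) = d. Then C(ρ_{GHZ_N}) = F(1, N), where F is defined as in the context. -/
open scoped BigOperators ComplexOrder Matrix

/-- The GHZ state vector on qubits indexed by `ι`: value `1/√2` at the all-zeros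
and all-ones functions, and `0` elsewhere. -/
noncomputable def ghzVec (ι : Type) [Fintype ι] [DecidableEq ι] : (ι → Fin 2) → ℂ :=
  fun x => if x = (fun _ => 0) ∨ x = (fun _ => 1) then ((Real.sqrt 2 : ℂ))⁻¹ else 0

/-- The GHZ projector `|GHZ⟩⟨GHZ|`. -/
noncomputable def ghzProj (ι : Type) [Fintype ι] [DecidableEq ι] : QMat ι :=
  fun x y => ghzVec ι x * star (ghzVec ι y)

/-- The GHZ-diagonal state `τ = ½(e₀e₀† + e₁e₁†)`: the diagonal matrix with
entries `½` at the all-zeros and all-ones indices and `0` elsewhere. -/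
noncomputable def tau (ι : Type) [Fintype ι] [DecidableEq ι] : QMat ι :=
  fun x y =>
    (if x = (fun _ => 0) ∧ y = (fun _ => 0) then ((2 : ℂ))⁻¹ else 0) +
    (if x = (fun _ => 1) ∧ y = (fun _ => 1) then ((2 : ℂ))⁻¹ else 0)
/-- The GHZ recursion value `F(x, n)` with fixed parameter `d`:
`F(x,1) = 0`, `F(x,2) = x`, `F(x,3) = 2x + d`,
`F(x,N) = 2^(N−2)·x + 2·F(d, N/2)` for even `N ≥ 4`, and
`F(x,N) = 2^(N−2)·x + F(d, (N−1)/2) + F(d, (N+1)/2)` for odd `N ≥ 5`. -/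
noncomputable def F (d : ℝ) (x : ℝ) (n : ℕ) : ℝ :=
  if n ≤ 1 then 0
  else if n = 2 then x
  else if n = 3 then 2 * x + d
  else if n % 2 = 0 then (2 : ℝ) ^ (n - 2) * x + 2 * F d d (n / 2)
  else (2 : ℝ) ^ (n - 2) * x + F d d ((n - 1) / 2) + F d d ((n + 1) / 2)
termination_by n
decreasing_by
  · omega
  · omega
  · omega

lemma F_zero_of_le_one (d x : ℝ) {n : ℕ} (h : n ≤ 1) : F d x n = 0 := by
  rw [F, if_pos h]

lemma F_two' (d x : ℝ) : F d x 2 = x := by rw [F]; norm_num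

lemma F_rec (d x : ℝ) {n : ℕ} (h : 2 ≤ n) :
    F d x n = (2:ℝ)^(n-2) * x + F d d (n/2) + F d d ((n+1)/2) := by
  rcases Nat.lt_or_ge n 4 with h4 | h4
  · interval_cases n
    · rw [F_two']; norm_num [F_zero_of_le_one]
    · rw [F]; norm_num [F_zero_of_le_one, F_two']
  · have h1 : ¬ n ≤ 1 := by omega
    have h2 : n ≠ 2 := by omega
    have h3 : n ≠ 3 := by omega
    rw [F, if_neg h1, if_neg h2, if_neg h3]
    rcases Nat.even_or_odd n with he | ho
    · have h0 : n % 2 = 0 := Nat.even_iff.mp he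
      rw [if_pos h0, show (n+1)/2 = n/2 from by omega]
      ring
    · have h0 : n % 2 = 1 := Nat.odd_iff.mp ho
      rw [if_neg (by omega : ¬ n % 2 = 0), show (n-1)/2 = n/2 from by omega]


lemma F_step (d : ℝ) {n : ℕ} (h : 2 ≤ n) :
    F d d (n+1) = F d d n + (2:ℝ)^(n-2)*d + (F d d (n/2 + 1) - F d d (n/2)) := by
  have e1 := F_rec d d (n := n+1) (by omega)
  have e2 := F_rec d d (n := n) h
  have hp : (2:ℝ)^(n+1-2) = 2*2^(n-2) := by
    rw [show n+1-2 = (n-2)+1 from by omega, pow_succ]; ring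
  rcases Nat.even_or_odd n with he | ho
  · have h0 : n % 2 = 0 := Nat.even_iff.mp he
    rw [show (n+1+1)/2 = n/2+1 from by omega, show (n+1)/2 = n/2 from by omega, hp] at e1
    rw [show (n+1)/2 = n/2 from by omega] at e2
    linarith
  · have h0 : n % 2 = 1 := Nat.odd_iff.mp ho
    rw [show (n+1+1)/2 = n/2+1 from by omega, show (n+1)/2 = n/2+1 from by omega, hp] at e1
    rw [show (n+1)/2 = n/2+1 from by omega] at e2
    linarith

lemma F_mono_succ {d : ℝ} (hd : 0 ≤ d) : ∀ n, 1 ≤ n → F d d n ≤ F d d (n+1) := by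
  intro n
  induction n using Nat.strong_induction_on with
  | _ n ih =>
    intro h1
    rcases eq_or_lt_of_le h1 with h | h
    · rw [← h, F_zero_of_le_one d d (le_refl 1), F_two']
      exact hd
    · have h2 : 2 ≤ n := h
      have hstep := F_step d h2
      have hih := ih (n/2) (by omega) (by omega)
      have hpow : (0:ℝ) ≤ (2:ℝ)^(n-2)*d :=
        mul_nonneg (pow_nonneg (by norm_num) _) hd
      linarith

lemma F_diff_mono {d : ℝ} (hd : 0 ≤ d) :
    ∀ b a, 1 ≤ a → a ≤ b → F d d (a+1) - F d d a ≤ F d d (b+1) - F d d b := by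
  intro b
  induction b using Nat.strong_induction_on with
  | _ b ih =>
    intro a h1 hab
    rcases eq_or_lt_of_le hab with h | h
    · rw [h]
    · have hb2 : 2 ≤ b := by omega
      have hsb := F_step d hb2
      have hmono := F_mono_succ hd (b/2) (by omega)
      rcases eq_or_lt_of_le h1 with ha | ha
      · rw [← ha, F_zero_of_le_one d d (le_refl 1), F_two']
        have hone : (1:ℝ) ≤ (2:ℝ)^(b-2) := by
          calc (1:ℝ) = 2^0 := by norm_num
          _ ≤ 2^(b-2) := pow_le_pow_right₀ one_le_two (Nat.zero_le _)
        have := mul_le_mul_of_nonneg_right hone hd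
        linarith
      · have ha2 : 2 ≤ a := ha
        have hsa := F_step d ha2
        have hihh := ih (b/2) (by omega) (a/2) (by omega) (by omega)
        have hpow : (2:ℝ)^(a-2) ≤ (2:ℝ)^(b-2) :=
          pow_le_pow_right₀ one_le_two (by omega)
        have := mul_le_mul_of_nonneg_right hpow hd
        linarith

lemma F_bal_aux {d : ℝ} (hd : 0 ≤ d) (m : ℕ) :
    ∀ j k, 1 ≤ k → k ≤ m/2 → m/2 = k + j →
      F d d (m/2) + F d d ((m+1)/2) ≤ F d d k + F d d (m-k) := by
  intro j
  induction j with
  | zero =>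
    intro k h1 h2 h3
    rw [show m/2 = k from by omega, show m - k = (m+1)/2 from by omega]
  | succ j ihj =>
    intro k h1 h2 h3
    have hkk : k ≤ m - k - 1 := by omega
    have hΔ := F_diff_mono hd (m-k-1) k h1 hkk
    rw [show m - k - 1 + 1 = m - k from by omega] at hΔ
    have hrec := ihj (k+1) (by omega) (by omega) (by omega)
    rw [show m - (k+1) = m - k - 1 from by omega] at hrec
    linarith

lemma F_convex {d : ℝ} (hd : 0 ≤ d) (m k : ℕ) (h1 : 1 ≤ k) (h2 : k < m) :
    F d d (m/2) + F d d ((m+1)/2) ≤ F d d k + F d d (m-k) := by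
  rcases le_or_gt k (m/2) with hk | hk
  · exact F_bal_aux hd m (m/2 - k) k h1 hk (by omega)
  · have h1' : 1 ≤ m - k := by omega
    have hk' : m - k ≤ m/2 := by omega
    have := F_bal_aux hd m (m/2 - (m-k)) (m-k) h1' hk' (by omega)
    rw [show m - (m-k) = k from by omega] at this
    linarith

lemma glue_eq_const {ι : Type} [Fintype ι] [DecidableEq ι] (A : Finset ι)
    (u : {x // x ∈ A} → Fin 2) (w : {x // x ∈ Aᶜ} → Fin 2) (c : Fin 2) :
    glue A u w = (fun _ => c) ↔ (u = fun _ => c) ∧ (w = fun _ => c) := by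
  constructor
  · intro h
    constructor
    · funext a
      have h1 := congrFun h a.1
      simp only [glue] at h1
      rw [dif_pos a.2] at h1
      exact h1
    · funext b
      have h1 := congrFun h b.1
      simp only [glue] at h1
      rw [dif_neg (Finset.mem_compl.mp b.2)] at h1
      exact h1
  · rintro ⟨hu, hw⟩
    funext x
    simp only [glue]
    split_ifs with h
    · exact congrFun hu ⟨x, h⟩
    · exact congrFun hw ⟨x, Finset.mem_compl.mpr h⟩

lemma sum_ite_and {β : Type} [Fintype β] [DecidableEq β] (P : Prop) [Decidable P]
    (b0 : β) (c : ℂ) :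
    ∑ b : β, (if P ∧ b = b0 then c else 0) = if P then c else 0 := by
  by_cases h : P
  · simp [h]
  · simp [h]

lemma reduce_tau {ι : Type} [Fintype ι] [DecidableEq ι] (A : Finset ι) :
    reduceTo A (tau ι) = tau {x // x ∈ A} := by
  funext u v
  simp only [reduceTo, tau, glue_eq_const, and_and_and_comm, and_self]
  rw [Finset.sum_add_distrib, sum_ite_and, sum_ite_and]

lemma star_inv_sqrt2 : ((Real.sqrt 2 : ℂ))⁻¹ * star ((Real.sqrt 2 : ℂ))⁻¹ = (2:ℂ)⁻¹ := by
  rw [← Complex.ofReal_inv, Complex.star_def, Complex.conj_ofReal,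
    ← Complex.ofReal_mul, ← mul_inv, Real.mul_self_sqrt (by norm_num : (0:ℝ) ≤ 2)]
  norm_num

lemma reduce_ghz {ι : Type} [Fintype ι] [DecidableEq ι] (A : Finset ι)
    (hA' : Aᶜ.Nonempty) :
    reduceTo A (ghzProj ι) = tau {x // x ∈ A} := by
  have hne : (fun _ : {x // x ∈ Aᶜ} => (0 : Fin 2)) ≠ (fun _ => 1) := by
    obtain ⟨b, hb⟩ := hA'
    intro h
    exact absurd (congrFun h ⟨b, hb⟩) (by decide)
  funext u v
  simp only [reduceTo, ghzProj, ghzVec, glue_eq_const]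
  have key : ∀ w : {x // x ∈ Aᶜ} → Fin 2,
      (if (u = (fun _ => 0) ∧ w = (fun _ => 0)) ∨ (u = (fun _ => 1) ∧ w = (fun _ => 1))
        then ((Real.sqrt 2 : ℂ))⁻¹ else 0) *
      star (if (v = (fun _ => 0) ∧ w = (fun _ => 0)) ∨ (v = (fun _ => 1) ∧ w = (fun _ => 1))
        then ((Real.sqrt 2 : ℂ))⁻¹ else 0)
      = (if ((u = fun _ => 0) ∧ (v = fun _ => 0)) ∧ w = (fun _ => 0) then (2:ℂ)⁻¹ else 0)
        + (if ((u = fun _ => 1) ∧ (v = fun _ => 1)) ∧ w = (fun _ => 1) then (2:ℂ)⁻¹ else 0) := by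
    intro w
    simp only [apply_ite (star : ℂ → ℂ), star_zero, mul_ite, ite_mul, mul_zero, zero_mul,
      star_inv_sqrt2]
    by_cases h0 : w = (fun _ => 0) <;> by_cases h1 : w = (fun _ => 1)
    · exact absurd (h0.symm.trans h1) hne
    · simp [h0, h1, hne, Ne.symm hne, ← ite_and, and_comm]
    · simp [h0, h1, hne, Ne.symm hne, ← ite_and, and_comm]
    · simp [h0, h1, hne, Ne.symm hne]
  rw [Finset.sum_congr rfl (fun w _ => key w), Finset.sum_add_distrib, sum_ite_and, sum_ite_and]
  simp only [tau]

lemma ccm_small (D : ∀ (κ : Type) [Fintype κ] [DecidableEq κ], QMat κ → QMat κ → ℝ)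
    (ι : Type) [Fintype ι] [DecidableEq ι] (ρ : QMat ι) (h : Fintype.card ι ≤ 1) :
    CCM D ι ρ = 0 := by
  rw [CCM, if_pos h]

lemma ccm_tau (D : ∀ (κ : Type) [Fintype κ] [DecidableEq κ], QMat κ → QMat κ → ℝ)
    {d : ℝ} (hd : 0 ≤ d) (N : ℕ)
    (hτ : ∀ (ι : Type) [Fintype ι] [DecidableEq ι],
      2 ≤ Fintype.card ι → Fintype.card ι ≤ N - 1 →
      ∀ A : Finset ι, A.Nonempty → Aᶜ.Nonempty →
        D ι (tau ι) (boxProd A (reduceTo A (tau ι)) (reduceTo Aᶜ (tau ι))) = d) :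
    ∀ n, n ≤ N - 1 → ∀ (ι : Type) [Fintype ι] [DecidableEq ι],
      Fintype.card ι = n → CCM D ι (tau ι) = F d d n := by
  intro n
  induction n using Nat.strong_induction_on with
  | _ n ih =>
    intro hn ι _ _ hcard
    by_cases h1 : n ≤ 1
    · rw [ccm_small D ι _ (by omega), F_zero_of_le_one d d h1]
    · have h2n : 2 ≤ n := by omega
      rw [CCM, if_neg (by omega)]
      simp only [hcard]
      have key : ∀ A : {A : Finset ι // A.Nonempty ∧ Aᶜ.Nonempty},
          (2:ℝ) ^ (n - 2) *
              D ι (tau ι) (boxProd A.1 (reduceTo A.1 (tau ι)) (reduceTo (A.1 : Finset ι)ᶜ (tau ι))) +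
            CCM D {x // x ∈ A.1} (reduceTo A.1 (tau ι)) +
            CCM D {x // x ∈ (A.1 : Finset ι)ᶜ} (reduceTo (A.1 : Finset ι)ᶜ (tau ι))
          = 2^(n-2)*d + F d d A.1.card + F d d (n - A.1.card) := by
        intro A
        have hcompl : (A.1ᶜ).card = n - A.1.card := by
          rw [Finset.card_compl, hcard]
        have hk1 : 1 ≤ A.1.card := A.2.1.card_pos
        have hklt : A.1.card < n := by
          have h3 := A.2.2.card_pos
          rw [Finset.card_compl, hcard] at h3
          omega
        rw [hτ ι (by omega) (by omega) A.1 A.2.1 A.2.2, reduce_tau, reduce_tau,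
          ih A.1.card (by omega) (by omega) _ (Fintype.card_coe A.1),
          ih (n - A.1.card) (by omega) (by omega) _ (by rw [Fintype.card_coe]; exact hcompl)]
      have hbound : 1 ≤ n/2 ∧ n/2 ≤ n := by omega
      obtain ⟨A0, hA0sub, hA0card⟩ :=
        Finset.exists_subset_card_eq (s := (Finset.univ : Finset ι)) (n := n/2)
          (by rw [Finset.card_univ, hcard]; omega)
      have hA0ne : A0.Nonempty := Finset.card_pos.mp (by omega)
      have hA0cne : (A0ᶜ).Nonempty := Finset.card_pos.mp (by
        rw [Finset.card_compl, hcard, hA0card]; omega)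
      set A0' : {A : Finset ι // A.Nonempty ∧ Aᶜ.Nonempty} := ⟨A0, hA0ne, hA0cne⟩
      have hval0 : (2:ℝ)^(n-2)*d + F d d A0.card + F d d (n - A0.card) = F d d n := by
        rw [hA0card, show n - n/2 = (n+1)/2 from by omega, F_rec d d h2n]
      have hlb : ∀ r ∈ { r : ℝ | ∃ A : {A : Finset ι // A.Nonempty ∧ Aᶜ.Nonempty},
          r = (2:ℝ) ^ (n - 2) *
              D ι (tau ι) (boxProd A.1 (reduceTo A.1 (tau ι)) (reduceTo (A.1 : Finset ι)ᶜ (tau ι))) +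
            CCM D {x // x ∈ A.1} (reduceTo A.1 (tau ι)) +
            CCM D {x // x ∈ (A.1 : Finset ι)ᶜ} (reduceTo (A.1 : Finset ι)ᶜ (tau ι)) },
          F d d n ≤ r := by
        rintro r ⟨A, rfl⟩
        rw [key A]
        have hk1 : 1 ≤ A.1.card := A.2.1.card_pos
        have hklt : A.1.card < n := by
          have h3 := A.2.2.card_pos
          rw [Finset.card_compl, hcard] at h3
          omega
        have := F_convex hd n A.1.card hk1 hklt
        rw [F_rec d d h2n]
        linarith
      have hmem : F d d n ∈ { r : ℝ | ∃ A : {A : Finset ι // A.Nonempty ∧ Aᶜ.Nonempty},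
          r = (2:ℝ) ^ (n - 2) *
              D ι (tau ι) (boxProd A.1 (reduceTo A.1 (tau ι)) (reduceTo (A.1 : Finset ι)ᶜ (tau ι))) +
            CCM D {x // x ∈ A.1} (reduceTo A.1 (tau ι)) +
            CCM D {x // x ∈ (A.1 : Finset ι)ᶜ} (reduceTo (A.1 : Finset ι)ᶜ (tau ι)) } := by
        exact ⟨A0', by rw [key A0', hval0]⟩
      exact le_antisymm (csInf_le ⟨F d d n, hlb⟩ hmem) (le_csInf ⟨_, hmem⟩ hlb)

theorem ccm_ghz_eq_F'
    (D : ∀ (κ : Type) [Fintype κ] [DecidableEq κ], QMat κ → QMat κ → ℝ)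
    (d : ℝ) (hd : 0 ≤ d) (N : ℕ) (hN : 2 ≤ N)
    (hghz : ∀ A : Finset (Fin N), A.Nonempty → Aᶜ.Nonempty →
      D (Fin N) (ghzProj (Fin N))
        (boxProd A (reduceTo A (ghzProj (Fin N)))
          (reduceTo Aᶜ (ghzProj (Fin N)))) = 1)
    (hτ : ∀ (ι : Type) [Fintype ι] [DecidableEq ι],
      2 ≤ Fintype.card ι → Fintype.card ι ≤ N - 1 →
      ∀ A : Finset ι, A.Nonempty → Aᶜ.Nonempty →
        D ι (tau ι) (boxProd A (reduceTo A (tau ι)) (reduceTo Aᶜ (tau ι))) = d) :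
    CCM D (Fin N) (ghzProj (Fin N)) = F d 1 N := by
  have hcard : Fintype.card (Fin N) = N := Fintype.card_fin N
  rw [CCM, if_neg (by omega)]
  simp only [hcard]
  have key : ∀ A : {A : Finset (Fin N) // A.Nonempty ∧ Aᶜ.Nonempty},
      (2:ℝ) ^ (N - 2) *
          D (Fin N) (ghzProj (Fin N))
            (boxProd A.1 (reduceTo A.1 (ghzProj (Fin N)))
              (reduceTo (A.1 : Finset (Fin N))ᶜ (ghzProj (Fin N)))) +
        CCM D {x // x ∈ A.1} (reduceTo A.1 (ghzProj (Fin N))) +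
        CCM D {x // x ∈ (A.1 : Finset (Fin N))ᶜ} (reduceTo (A.1 : Finset (Fin N))ᶜ (ghzProj (Fin N)))
      = 2^(N-2)*1 + F d d A.1.card + F d d (N - A.1.card) := by
    intro A
    have hcompl : (A.1ᶜ).card = N - A.1.card := by
      rw [Finset.card_compl, hcard]
    have hk1 : 1 ≤ A.1.card := A.2.1.card_pos
    have hklt : A.1.card < N := by
      have h3 := A.2.2.card_pos
      rw [Finset.card_compl, hcard] at h3
      omega
    have hcc : ((A.1 : Finset (Fin N))ᶜ)ᶜ.Nonempty := by rw [compl_compl]; exact A.2.1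
    rw [hghz A.1 A.2.1 A.2.2, reduce_ghz A.1 A.2.2, reduce_ghz _ hcc,
      ccm_tau D hd N hτ A.1.card (by omega) _ (Fintype.card_coe A.1),
      ccm_tau D hd N hτ (N - A.1.card) (by omega) _ (by rw [Fintype.card_coe]; exact hcompl)]
  obtain ⟨A0, hA0sub, hA0card⟩ :=
    Finset.exists_subset_card_eq (s := (Finset.univ : Finset (Fin N))) (n := N/2)
      (by rw [Finset.card_univ, hcard]; omega)
  have hA0ne : A0.Nonempty := Finset.card_pos.mp (by omega)
  have hA0cne : (A0ᶜ).Nonempty := Finset.card_pos.mp (by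
    rw [Finset.card_compl, hcard, hA0card]; omega)
  set A0' : {A : Finset (Fin N) // A.Nonempty ∧ Aᶜ.Nonempty} := ⟨A0, hA0ne, hA0cne⟩
  have hval0 : (2:ℝ)^(N-2)*1 + F d d A0.card + F d d (N - A0.card) = F d 1 N := by
    rw [hA0card, show N - N/2 = (N+1)/2 from by omega, F_rec d 1 hN]
  have hlb : ∀ r ∈ { r : ℝ | ∃ A : {A : Finset (Fin N) // A.Nonempty ∧ Aᶜ.Nonempty},
      r = (2:ℝ) ^ (N - 2) *
          D (Fin N) (ghzProj (Fin N))
            (boxProd A.1 (reduceTo A.1 (ghzProj (Fin N)))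
              (reduceTo (A.1 : Finset (Fin N))ᶜ (ghzProj (Fin N)))) +
        CCM D {x // x ∈ A.1} (reduceTo A.1 (ghzProj (Fin N))) +
        CCM D {x // x ∈ (A.1 : Finset (Fin N))ᶜ} (reduceTo (A.1 : Finset (Fin N))ᶜ (ghzProj (Fin N))) },
      F d 1 N ≤ r := by
    rintro r ⟨A, rfl⟩
    rw [key A]
    have hk1 : 1 ≤ A.1.card := A.2.1.card_pos
    have hklt : A.1.card < N := by
      have h3 := A.2.2.card_pos
      rw [Finset.card_compl, hcard] at h3
      omega
    have := F_convex hd N A.1.card hk1 hklt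
    rw [F_rec d 1 hN]
    linarith
  have hmem : F d 1 N ∈ { r : ℝ | ∃ A : {A : Finset (Fin N) // A.Nonempty ∧ Aᶜ.Nonempty},
      r = (2:ℝ) ^ (N - 2) *
          D (Fin N) (ghzProj (Fin N))
            (boxProd A.1 (reduceTo A.1 (ghzProj (Fin N)))
              (reduceTo (A.1 : Finset (Fin N))ᶜ (ghzProj (Fin N)))) +
        CCM D {x // x ∈ A.1} (reduceTo A.1 (ghzProj (Fin N))) +
        CCM D {x // x ∈ (A.1 : Finset (Fin N))ᶜ} (reduceTo (A.1 : Finset (Fin N))ᶜ (ghzProj (Fin N))) } :=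
    ⟨A0', by rw [key A0', hval0]⟩
  exact le_antisymm (csInf_le ⟨F d 1 N, hlb⟩ hmem) (le_csInf ⟨_, hmem⟩ hlb)


/-- CCM of GHZ states: fix `d ≥ 0` and `N ≥ 2`; suppose
`D(ρ_{GHZ_N}, (ρ_{GHZ_N})_A ⊠ (ρ_{GHZ_N})_B) = 1` for every bipartition `(A,B)`
of the `N` qubits, and `D(τ_M, (τ_M)_A ⊠ (τ_M)_B) = d` for every system of `M`
qubits with `2 ≤ M ≤ N − 1` and every bipartition. Then `C(ρ_{GHZ_N}) = F(1, N)`. -/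
theorem ccm_ghz_eq_F
    (D : ∀ (κ : Type) [Fintype κ] [DecidableEq κ], QMat κ → QMat κ → ℝ)
    (d : ℝ) (hd : 0 ≤ d) (N : ℕ) (hN : 2 ≤ N)
    (hghz : ∀ A : Finset (Fin N), A.Nonempty → Aᶜ.Nonempty →
      D (Fin N) (ghzProj (Fin N))
        (boxProd A (reduceTo A (ghzProj (Fin N)))
          (reduceTo Aᶜ (ghzProj (Fin N)))) = 1)
    (hτ : ∀ (ι : Type) [Fintype ι] [DecidableEq ι],
      2 ≤ Fintype.card ι → Fintype.card ι ≤ N - 1 →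
      ∀ A : Finset ι, A.Nonempty → Aᶜ.Nonempty →
        D ι (tau ι) (boxProd A (reduceTo A (tau ι)) (reduceTo Aᶜ (tau ι))) = d) :
    CCM D (Fin N) (ghzProj (Fin N)) = F d 1 N := by
  exact ccm_ghz_eq_F' D d hd N hN hghz hτ
end
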